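/- Let ρ, T > 0, α_N = e^{-ρT/N}, and fix t ∈ (0,T], n_t = ⌈Nt/T⌉. With ν_i^{(N)} defined by ν_1 = (1/(2+α))(1 + ((2-α^2)/2)(α/(2-α^2))^{N+1}) and ν_i = (1/(2+α))(1-α + (1-α^2)(α/(2-α^2))^{N+2-i}) for i ≥ 2 (α = α_N), one has ∑_{i=1}^{n_t} ν_i^{(N)} → (e^{-3ρT}(4e^{3ρt} - 1) + 6(ρt + 1))/18 as N → ∞. -/

import Mathlib

open Real Filter

private lemma slope_tendsto_aux {g : ℝ → ℝ} {c : ℝ} (hg : HasDerivAt g c 0) (hg0 : g 0 = 0)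
    {u : ℕ → ℝ} (h0 : Tendsto u atTop (nhds 0)) (hne : ∀ᶠ N in atTop, u N ≠ 0) :
    Tendsto (fun N => g (u N) / u N) atTop (nhds c) := by
  have h1 := hasDerivAt_iff_tendsto_slope.mp hg
  have h2 : Tendsto u atTop (nhdsWithin 0 {(0:ℝ)}ᶜ) := by
    rw [tendsto_nhdsWithin_iff]
    exact ⟨h0, hne.mono fun N h => h⟩
  refine (h1.comp h2).congr fun N => ?_
  simp [slope_def_field, hg0]

private lemma deriv_log_two_sub_exp : HasDerivAt (fun x:ℝ => Real.log (2 - Real.exp (-(2*x)))) 2 0 := by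
  have h1 : HasDerivAt (fun x:ℝ => -(2*x)) (-2) 0 := by
    have := (((hasDerivAt_id (0:ℝ)).const_mul (2:ℝ)).neg)
    simp only [mul_one] at this
    exact this
  have h2 := h1.exp
  have h3 : HasDerivAt (fun x:ℝ => 2 - Real.exp (-(2*x))) 2 0 := by
    simpa using (HasDerivAt.const_sub (2:ℝ) h2)
  have h4 := h3.log (by norm_num)
  convert h4 using 1
  norm_num

private lemma deriv_one_sub_exp : HasDerivAt (fun x:ℝ => 1 - Real.exp (-x)) 1 0 := by
  have h1 : HasDerivAt (fun x:ℝ => -x) (-1) 0 := by exact (hasDerivAt_id (0:ℝ)).neg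
  have h2 := h1.exp
  simpa using (HasDerivAt.const_sub (1:ℝ) h2)

private lemma nu_hu0 (ρ T : ℝ) : Tendsto (fun N : ℕ => ρ*T/(N:ℝ)) atTop (nhds 0) :=
  tendsto_const_div_atTop_nhds_zero_nat (ρ*T)

private lemma nu_ha1 (ρ T : ℝ) : Tendsto (fun N : ℕ => Real.exp (-ρ*T/(N:ℝ))) atTop (nhds 1) := by
  have h := tendsto_const_div_atTop_nhds_zero_nat (-ρ*T)
  have := (Real.continuous_exp.tendsto 0).comp h
  simpa [Function.comp_def] using this

-- N * log(2 - a_N^2) → 2ρT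
private lemma nu_NL (ρ T : ℝ) (hρ : 0 < ρ) (hT : 0 < T) :
    Tendsto (fun N : ℕ => (N:ℝ) * Real.log (2 - Real.exp (-ρ*T/(N:ℝ))^2)) atTop (nhds (2*(ρ*T))) := by
  have hρT : 0 < ρ*T := mul_pos hρ hT
  have hs := slope_tendsto_aux deriv_log_two_sub_exp (by norm_num)
      (nu_hu0 ρ T) (by
        filter_upwards [eventually_ge_atTop 1] with N hN
        have hN0 : (0:ℝ) < N := by exact_mod_cast hN
        exact (div_pos hρT hN0).ne')
  have h2 := hs.const_mul (ρ*T)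
  rw [show (ρ*T)*2 = 2*(ρ*T) by ring] at h2
  refine Tendsto.congr' ?_ h2
  filter_upwards [eventually_ge_atTop 1] with N hN
  have hN0 : (0:ℝ) < N := by exact_mod_cast hN
  have he : Real.exp (-(2*(ρ*T/(N:ℝ)))) = Real.exp (-ρ*T/(N:ℝ))^2 := by
    rw [pow_two, ← Real.exp_add]; congr 1; ring
  rw [he]
  field_simp

-- N * (1 - a_N) → ρT
private lemma nu_Na (ρ T : ℝ) (hρ : 0 < ρ) (hT : 0 < T) :
    Tendsto (fun N : ℕ => (N:ℝ) * (1 - Real.exp (-ρ*T/(N:ℝ)))) atTop (nhds (ρ*T)) := by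
  have hρT : 0 < ρ*T := mul_pos hρ hT
  have hs := slope_tendsto_aux deriv_one_sub_exp (by norm_num)
      (nu_hu0 ρ T) (by
        filter_upwards [eventually_ge_atTop 1] with N hN
        have hN0 : (0:ℝ) < N := by exact_mod_cast hN
        exact (div_pos hρT hN0).ne')
  have h2 := hs.const_mul (ρ*T)
  rw [show (ρ*T)*1 = ρ*T by ring] at h2
  refine Tendsto.congr' ?_ h2
  filter_upwards [eventually_ge_atTop 1] with N hN
  have hN0 : (0:ℝ) < N := by exact_mod_cast hN
  have he : Real.exp (-(ρ*T/(N:ℝ))) = Real.exp (-ρ*T/(N:ℝ)) := by congr 1; ring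
  rw [he]
  field_simp

-- log(2-a^2) → 0
private lemma nu_L0 (ρ T : ℝ) :
    Tendsto (fun N : ℕ => Real.log (2 - Real.exp (-ρ*T/(N:ℝ))^2)) atTop (nhds 0) := by
  have h1 : Tendsto (fun N : ℕ => 2 - Real.exp (-ρ*T/(N:ℝ))^2) atTop (nhds 1) := by
    have := (tendsto_const_nhds (α := ℕ) (x := (2:ℝ)) (f := atTop)).sub ((nu_ha1 ρ T).pow 2)
    norm_num at this
    refine this.congr fun N => ?_
    simp [neg_mul]
  have h2 := ((Real.continuousAt_log (by norm_num : (1:ℝ) ≠ 0)).tendsto).comp h1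
  simpa [Function.comp_def] using h2

private lemma nu_nN (T t : ℝ) (hT : 0 < T) (ht0 : 0 < t) :
    Tendsto (fun N : ℕ => (⌈(N:ℝ)*t/T⌉₊ : ℝ)/(N:ℝ)) atTop (nhds (t/T)) := by
  have hupper : Tendsto (fun N : ℕ => t/T + 1/(N:ℝ)) atTop (nhds (t/T)) := by
    have := (tendsto_const_nhds (α := ℕ) (x := t/T) (f := atTop)).add
      (tendsto_const_div_atTop_nhds_zero_nat 1)
    simpa using this
  refine tendsto_of_tendsto_of_tendsto_of_le_of_le' tendsto_const_nhds hupper ?_ ?_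
  · filter_upwards [eventually_ge_atTop 1] with N hN
    have hN0 : (0:ℝ) < N := by exact_mod_cast hN
    rw [le_div_iff₀ hN0]
    have h2 := Nat.le_ceil ((N:ℝ)*t/T)
    have h3 : t/T*(N:ℝ) = (N:ℝ)*t/T := by ring
    linarith
  · filter_upwards [eventually_ge_atTop 1] with N hN
    have hN0 : (0:ℝ) < N := by exact_mod_cast hN
    have h2 : (⌈(N:ℝ)*t/T⌉₊:ℝ) < (N:ℝ)*t/T + 1 :=
      Nat.ceil_lt_add_one (div_nonneg (mul_nonneg (Nat.cast_nonneg N) ht0.le) hT.le)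
    rw [div_le_iff₀ hN0]
    have h3 : (t/T + 1/(N:ℝ))*(N:ℝ) = (N:ℝ)*t/T + 1 := by field_simp
    rw [h3]
    linarith

private lemma nu_nL (ρ T t : ℝ) (hρ : 0 < ρ) (hT : 0 < T) (ht0 : 0 < t) :
    Tendsto (fun N : ℕ => (⌈(N:ℝ)*t/T⌉₊ : ℝ) * Real.log (2 - Real.exp (-ρ*T/(N:ℝ))^2))
      atTop (nhds (2*(ρ*t))) := by
  have h := (nu_nN T t hT ht0).mul (nu_NL ρ T hρ hT)
  rw [show t/T*(2*(ρ*T)) = 2*(ρ*t) by field_simp] at h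
  refine Tendsto.congr' ?_ h
  filter_upwards [eventually_ge_atTop 1] with N hN
  have hN0 : (0:ℝ) < N := by exact_mod_cast hN
  field_simp

private lemma nu_nu (ρ T t : ℝ) (hρ : 0 < ρ) (hT : 0 < T) (ht0 : 0 < t) :
    Tendsto (fun N : ℕ => (⌈(N:ℝ)*t/T⌉₊ : ℝ) * (ρ*T/(N:ℝ))) atTop (nhds (ρ*t)) := by
  have h := (nu_nN T t hT ht0).mul_const (ρ*T)
  rw [show t/T*(ρ*T) = ρ*t by field_simp] at h
  refine Tendsto.congr' ?_ h
  filter_upwards [] with N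
  ring

private lemma nu_na (ρ T t : ℝ) (hρ : 0 < ρ) (hT : 0 < T) (ht0 : 0 < t) :
    Tendsto (fun N : ℕ => (⌈(N:ℝ)*t/T⌉₊ : ℝ) * (1 - Real.exp (-ρ*T/(N:ℝ))))
      atTop (nhds (ρ*t)) := by
  have h := (nu_nN T t hT ht0).mul (nu_Na ρ T hρ hT)
  rw [show t/T*(ρ*T) = ρ*t by field_simp] at h
  refine Tendsto.congr' ?_ h
  filter_upwards [eventually_ge_atTop 1] with N hN
  have hN0 : (0:ℝ) < N := by exact_mod_cast hN
  field_simp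

private lemma nu_pos2 (ρ T : ℝ) (hρ : 0 < ρ) (hT : 0 < T) (N : ℕ) :
    0 < 2 - Real.exp (-ρ*T/(N:ℝ))^2 := by
  have h0 : -ρ*T/(N:ℝ) = -(ρ*T/N) := by ring
  have h1 : Real.exp (-ρ*T/(N:ℝ)) ≤ 1 := by
    rw [h0, Real.exp_le_one_iff]
    have : (0:ℝ) ≤ ρ*T/N := by positivity
    linarith
  nlinarith [Real.exp_pos (-ρ*T/(N:ℝ))]

private lemma nu_pow (ρ T : ℝ) (hρ : 0 < ρ) (hT : 0 < T) (N k : ℕ) :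
    (Real.exp (-ρ*T/(N:ℝ))/(2-Real.exp (-ρ*T/(N:ℝ))^2))^k
      = Real.exp ((k:ℝ) * (-ρ*T/(N:ℝ) - Real.log (2-Real.exp (-ρ*T/(N:ℝ))^2))) := by
  rw [mul_sub, Real.exp_sub, Real.exp_nat_mul, Real.exp_nat_mul,
    Real.exp_log (nu_pos2 ρ T hρ hT N), div_pow]

private lemma nu_b1 (ρ T : ℝ) (hρ : 0 < ρ) (hT : 0 < T) :
    Tendsto (fun N : ℕ => (Real.exp (-ρ*T/(N:ℝ))/(2-Real.exp (-ρ*T/(N:ℝ))^2))^(N+1))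
      atTop (nhds (Real.exp (-(3*(ρ*T))))) := by
  have hg : Tendsto (fun N : ℕ => -(ρ*T) - ρ*T/(N:ℝ)
      - (N:ℝ)*Real.log (2-Real.exp (-ρ*T/(N:ℝ))^2)
      - Real.log (2-Real.exp (-ρ*T/(N:ℝ))^2)) atTop (nhds (-(ρ*T) - 0 - 2*(ρ*T) - 0)) :=
    ((tendsto_const_nhds.sub (nu_hu0 ρ T)).sub (nu_NL ρ T hρ hT)).sub (nu_L0 ρ T)
  rw [show -(ρ*T) - 0 - 2*(ρ*T) - 0 = -(3*(ρ*T)) by ring] at hg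
  have h2 := (Real.continuous_exp.tendsto _).comp hg
  refine Tendsto.congr' ?_ h2
  filter_upwards [eventually_ge_atTop 1] with N hN
  have hN0 : (0:ℝ) < N := by exact_mod_cast hN
  simp only [Function.comp]
  rw [nu_pow ρ T hρ hT N (N+1)]
  congr 1
  push_cast
  field_simp
  ring

private lemma nu_nle (T t : ℝ) (hT : 0 < T) (htT : t ≤ T) (N : ℕ) : ⌈(N:ℝ)*t/T⌉₊ ≤ N := by
  rw [Nat.ceil_le, div_le_iff₀ hT]
  nlinarith [mul_le_mul_of_nonneg_left htT (Nat.cast_nonneg (α := ℝ) N)]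

private lemma nu_b2 (ρ T t : ℝ) (hρ : 0 < ρ) (hT : 0 < T) (ht0 : 0 < t) (htT : t ≤ T) :
    Tendsto (fun N : ℕ => (Real.exp (-ρ*T/(N:ℝ))/(2-Real.exp (-ρ*T/(N:ℝ))^2))^(N+2-⌈(N:ℝ)*t/T⌉₊))
      atTop (nhds (Real.exp (-(3*(ρ*(T-t)))))) := by
  have hg : Tendsto (fun N : ℕ => -(ρ*T) - 2*(ρ*T/(N:ℝ))
      + (⌈(N:ℝ)*t/T⌉₊:ℝ)*(ρ*T/(N:ℝ))
      - (N:ℝ)*Real.log (2-Real.exp (-ρ*T/(N:ℝ))^2)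
      - 2*Real.log (2-Real.exp (-ρ*T/(N:ℝ))^2)
      + (⌈(N:ℝ)*t/T⌉₊:ℝ)*Real.log (2-Real.exp (-ρ*T/(N:ℝ))^2))
      atTop (nhds (-(ρ*T) - 2*0 + ρ*t - 2*(ρ*T) - 2*0 + 2*(ρ*t))) :=
    (((((tendsto_const_nhds.sub ((nu_hu0 ρ T).const_mul 2)).add
      (nu_nu ρ T t hρ hT ht0)).sub (nu_NL ρ T hρ hT)).sub
      ((nu_L0 ρ T).const_mul 2)).add (nu_nL ρ T t hρ hT ht0))
  rw [show -(ρ*T) - 2*0 + ρ*t - 2*(ρ*T) - 2*0 + 2*(ρ*t) = -(3*(ρ*(T-t))) by ring] at hg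
  have h2 := (Real.continuous_exp.tendsto _).comp hg
  refine Tendsto.congr' ?_ h2
  filter_upwards [eventually_ge_atTop 1] with N hN
  have hN0 : (0:ℝ) < N := by exact_mod_cast hN
  simp only [Function.comp]
  rw [nu_pow ρ T hρ hT N (N+2-⌈(N:ℝ)*t/T⌉₊)]
  congr 1
  rw [Nat.cast_sub ((nu_nle T t hT htT N).trans (by omega))]
  push_cast
  field_simp
  ring

set_option maxHeartbeats 1000000 in
private lemma nu_sum_eq (ρ T t : ℝ) (hρ : 0 < ρ) (hT : 0 < T) (ht0 : 0 < t) (htT : t ≤ T)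
    (ν : ℕ → ℕ → ℝ)
    (hν1 : ∀ N : ℕ,
      ν N 1 = (1/(2+Real.exp (-ρ*T/N)))
        * (1 + ((2-(Real.exp (-ρ*T/N))^2)/2)
            * (Real.exp (-ρ*T/N)/(2-(Real.exp (-ρ*T/N))^2))^(N+1)))
    (hνi : ∀ N i, 2 ≤ i →
      ν N i = (1/(2+Real.exp (-ρ*T/N)))
        * (1 - Real.exp (-ρ*T/N) + (1-(Real.exp (-ρ*T/N))^2)
            * (Real.exp (-ρ*T/N)/(2-(Real.exp (-ρ*T/N))^2))^(N+2-i)))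
    (N : ℕ) (hN : 1 ≤ N) :
    ∑ i ∈ Finset.Icc 1 (⌈(N:ℝ)*t/T⌉₊), ν N i =
      (1/(2+Real.exp (-ρ*T/(N:ℝ))))
        * (1 + ((2-Real.exp (-ρ*T/(N:ℝ))^2)/2)
            * (Real.exp (-ρ*T/(N:ℝ))/(2-Real.exp (-ρ*T/(N:ℝ))^2))^(N+1))
      + ((⌈(N:ℝ)*t/T⌉₊:ℝ)-1) * (1 - Real.exp (-ρ*T/(N:ℝ))) / (2 + Real.exp (-ρ*T/(N:ℝ)))
      + (-((1+Real.exp (-ρ*T/(N:ℝ)))*(2-Real.exp (-ρ*T/(N:ℝ))^2)) / (2+Real.exp (-ρ*T/(N:ℝ)))^2)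
        * ((Real.exp (-ρ*T/(N:ℝ))/(2-Real.exp (-ρ*T/(N:ℝ))^2))^(N+1)
          - (Real.exp (-ρ*T/(N:ℝ))/(2-Real.exp (-ρ*T/(N:ℝ))^2))^(N+2-⌈(N:ℝ)*t/T⌉₊)) := by
  have hN0 : (0:ℝ) < N := by exact_mod_cast hN
  have hA := hν1 N
  have hB : ∀ i, 2 ≤ i → ν N i = (1/(2+Real.exp (-ρ*T/N)))
        * (1 - Real.exp (-ρ*T/N) + (1-(Real.exp (-ρ*T/N))^2)
            * (Real.exp (-ρ*T/N)/(2-(Real.exp (-ρ*T/N))^2))^(N+2-i)) := fun i hi => hνi N i hi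
  set x := Real.exp (-ρ*T/(N:ℝ)) with hx
  set n := ⌈(N:ℝ)*t/T⌉₊ with hn
  have hx0 : 0 < x := Real.exp_pos _
  have hx1 : x < 1 := by
    rw [hx, Real.exp_lt_one_iff, show -ρ*T/(N:ℝ) = -(ρ*T/N) by ring, neg_lt_zero]
    positivity
  have hD : (1:ℝ) < 2 - x^2 := by nlinarith
  have hD0 : (2:ℝ) - x^2 ≠ 0 := by nlinarith
  have h2x : (2:ℝ) + x ≠ 0 := by nlinarith
  have hblt : x/(2-x^2) < 1 := by
    rw [div_lt_one (by nlinarith)]; nlinarith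
  have hbne : x/(2-x^2) ≠ 1 := ne_of_lt hblt
  have hbm1 : x/(2-x^2) - 1 ≠ 0 := sub_ne_zero.mpr hbne
  have hn1 : 1 ≤ n := by
    rw [hn]
    exact Nat.one_le_ceil_iff.mpr (div_pos (mul_pos hN0 ht0) hT)
  -- split off i = 1
  rw [← Finset.add_sum_erase _ _ (Finset.mem_Icc.mpr ⟨le_refl 1, hn1⟩), Finset.Icc_erase_left]
  rw [hA]
  have hstep : ∑ i ∈ Finset.Ioc 1 n, ν N i
      = ∑ i ∈ Finset.Ioc 1 n, ((1/(2+x)) * (1 - x + (1-x^2)*(x/(2-x^2))^(N+2-i))) :=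
    Finset.sum_congr rfl (fun i hi => hB i (Finset.mem_Ioc.mp hi).1)
  rw [hstep, ← Finset.mul_sum, Finset.sum_add_distrib, Finset.sum_const, ← Finset.mul_sum]
  have hnle : n ≤ N := by
    rw [hn, Nat.ceil_le, div_le_iff₀ hT]
    nlinarith [mul_le_mul_of_nonneg_left htT (Nat.cast_nonneg (α := ℝ) N)]
  have hre : ∑ i ∈ Finset.Ioc 1 n, (x/(2-x^2))^(N+2-i)
      = ∑ j ∈ Finset.Ico (N+2-n) (N+1), (x/(2-x^2))^j := by
    refine Finset.sum_nbij' (fun i => N+2-i) (fun j => N+2-j) ?_ ?_ ?_ ?_ ?_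
    all_goals intro a ha
    all_goals simp only [Finset.mem_Ioc, Finset.mem_Ico] at ha ⊢
    all_goals try omega
    all_goals try (congr 1 <;> omega)
  rw [hre, geom_sum_Ico hbne (by omega)]
  rw [Nat.card_Ioc, nsmul_eq_mul, Nat.cast_sub hn1]
  push_cast
  have hx1' : (1:ℝ) - x ≠ 0 := sub_ne_zero.mpr (ne_of_gt (by linarith))
  have hgeo2 : ((x/(2-x^2))^(N+1) - (x/(2-x^2))^(N+2-n))/(x/(2-x^2) - 1)
      = ((2-x^2)*((x/(2-x^2))^(N+2-n) - (x/(2-x^2))^(N+1)))/((1-x)*(2+x)) := by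
    rw [div_eq_div_iff hbm1 (mul_ne_zero hx1' h2x)]
    field_simp
    ring
  rw [hgeo2]
  generalize (x/(2-x^2))^(N+2-n) = Q
  generalize (x/(2-x^2))^(N+1) = P
  field_simp
  ring


theorem nu_partial_sum_limit_kappa_one (ρ T t : ℝ)
    (hρ : 0 < ρ) (hT : 0 < T) (ht : t ∈ Set.Ioc 0 T)
    (ν : ℕ → ℕ → ℝ)
    (hν1 : ∀ N : ℕ,
      ν N 1 = (1/(2+Real.exp (-ρ*T/N)))
        * (1 + ((2-(Real.exp (-ρ*T/N))^2)/2)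
            * (Real.exp (-ρ*T/N)/(2-(Real.exp (-ρ*T/N))^2))^(N+1)))
    (hνi : ∀ N i, 2 ≤ i →
      ν N i = (1/(2+Real.exp (-ρ*T/N)))
        * (1 - Real.exp (-ρ*T/N) + (1-(Real.exp (-ρ*T/N))^2)
            * (Real.exp (-ρ*T/N)/(2-(Real.exp (-ρ*T/N))^2))^(N+2-i))) :
    Tendsto (fun N : ℕ => ∑ i ∈ Finset.Icc 1 (⌈(N : ℝ)*t/T⌉₊), ν N i)
      atTop (nhds ((Real.exp (-3*ρ*T)*(4*Real.exp (3*ρ*t) - 1) + 6*(ρ*t+1))/18)) := by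
  obtain ⟨ht0, htT⟩ := ht
  have ha1 := nu_ha1 ρ T
  have hb1 := nu_b1 ρ T hρ hT
  have hb2 := nu_b2 ρ T t hρ hT ht0 htT
  have hna := nu_na ρ T t hρ hT ht0
  -- limit of the closed form
  have t1a : Tendsto (fun N : ℕ => 1/(2+Real.exp (-ρ*T/(N:ℝ)))) atTop (nhds (1/(2+1))) :=
    tendsto_const_nhds.div (tendsto_const_nhds.add ha1) (by norm_num)
  have t1b : Tendsto (fun N : ℕ => (2-Real.exp (-ρ*T/(N:ℝ))^2)/2) atTop (nhds ((2-1^2)/2)) :=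
    (tendsto_const_nhds.sub (ha1.pow 2)).div_const 2
  have t1 := t1a.mul ((tendsto_const_nhds (α:=ℕ) (x:=(1:ℝ)) (f:=atTop)).add (t1b.mul hb1))
  have t2num : Tendsto (fun N : ℕ =>
      ((⌈(N:ℝ)*t/T⌉₊:ℝ)-1) * (1 - Real.exp (-ρ*T/(N:ℝ)))) atTop (nhds (ρ*t - (1-1))) := by
    refine Tendsto.congr (fun N => by ring) (hna.sub (tendsto_const_nhds.sub ha1))
  have t2 := t2num.div ((tendsto_const_nhds (α:=ℕ) (x:=(2:ℝ)) (f:=atTop)).add ha1) (by norm_num)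
  have t3c : Tendsto (fun N : ℕ =>
      -((1+Real.exp (-ρ*T/(N:ℝ)))*(2-Real.exp (-ρ*T/(N:ℝ))^2)) / (2+Real.exp (-ρ*T/(N:ℝ)))^2)
      atTop (nhds (-((1+1)*(2-1^2))/(2+1)^2)) :=
    Tendsto.div ((((tendsto_const_nhds.add ha1).mul (tendsto_const_nhds.sub (ha1.pow 2)))).neg)
      ((tendsto_const_nhds.add ha1).pow 2) (by norm_num)
  have t3 := t3c.mul (hb1.sub hb2)
  have hA := (t1.add t2).add t3
  have hC : (1/(2+1))*(1 + ((2-1^2)/2)*Real.exp (-(3*(ρ*T)))) + (ρ*t - (1-1))/(2+1)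
      + (-((1+1)*(2-1^2))/(2+1)^2)*(Real.exp (-(3*(ρ*T))) - Real.exp (-(3*(ρ*(T-t)))))
      = (Real.exp (-3*ρ*T)*(4*Real.exp (3*ρ*t) - 1) + 6*(ρ*t+1))/18 := by
    have e1 : Real.exp (-(3*(ρ*(T-t)))) = Real.exp (-3*ρ*T) * Real.exp (3*ρ*t) := by
      rw [← Real.exp_add]; congr 1; ring
    have e2 : Real.exp (-(3*(ρ*T))) = Real.exp (-3*ρ*T) := by congr 1; ring
    rw [e1, e2]; ring
  rw [hC] at hA
  refine Tendsto.congr' ?_ hA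
  filter_upwards [eventually_ge_atTop 1] with N hN
  exact (nu_sum_eq ρ T t hρ hT ht0 htT ν hν1 hνi N hN).symm
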